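/- Let Φ : Ω → A_n^m be N-times Gateaux differentiable in a domain Ω ⊂ E_k. Then for any multi-index (α_1,...,α_k) with α_1+...+α_k = N, the partial derivative ∂^N Φ / ∂x_1^{α_1}...∂x_k^{α_k} equals e_2^{α_2} e_3^{α_3} ⋯ e_k^{α_k} · Φ^{(N)}(ζ). Consequently, for the operator L_N Φ := Σ_{α_1+...+α_k=N} C_α ∂^N Φ/∂x^α with real coefficients C_α, one has L_N Φ(ζ) = Φ^{(N)}(ζ) · Σ_{α_1+...+α_k=N} C_α e_2^{α_2}⋯e_k^{α_k}; hence Φ satisfies L_N Φ = 0 throughout Ω whenever the characteristic equation Σ_{α_1+...+α_k=N} C_α e_2^{α_2}⋯e_k^{α_k} = 0 holds in A_n^m. -/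

import Mathlib

open Filter Topology

lemma gateaux_fderiv {E F : Type*} [NormedAddCommGroup E] [NormedSpace ℝ E]
    [NormedAddCommGroup F] [NormedSpace ℝ F]
    {g : E → F} {x v : E} {L : F} (hg : DifferentiableAt ℝ g x)
    (hlim : Tendsto (fun ε : ℝ => ε⁻¹ • (g (x + ε • v) - g x)) (𝓝[>] 0) (𝓝 L)) :
    fderiv ℝ g x v = L := by
  have hline : HasDerivAt (fun t : ℝ => x + t • v) v 0 := by
    simpa using ((hasDerivAt_id (0:ℝ)).smul_const v).const_add x
  have hφ : HasDerivAt (fun t : ℝ => g (x + t • v)) (fderiv ℝ g x v) 0 := by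
    have h1 : HasFDerivAt g (fderiv ℝ g x) ((fun t : ℝ => x + t • v) 0) := by
      simpa using hg.hasFDerivAt
    exact h1.comp_hasDerivAt 0 hline
  have h2 : Tendsto (slope (fun t : ℝ => g (x + t • v)) 0) (𝓝[>] 0)
      (𝓝 (fderiv ℝ g x v)) :=
    (hasDerivAt_iff_tendsto_slope.mp hφ).mono_left
      (nhdsWithin_mono _ (fun t ht => ht.ne'))
  refine tendsto_nhds_unique ?_ hlim
  refine h2.congr fun t => ?_
  simp [slope_def_module]

theorem mixed_partials_and_characteristic {n k N : ℕ} [NeZero k]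
    (A : Type*) [NormedCommRing A] [NormedAlgebra ℂ A]
    (e : Fin k → A) (he0 : e 0 = 1)
    (hli : ∀ x : Fin k → ℝ, ∑ j, (x j : ℂ) • e j = 0 → x = 0)
    (Ωℝ : Set (Fin k → ℝ)) (hΩo : IsOpen Ωℝ) (hΩc : IsConnected Ωℝ)
    (Φ : A → A) (Φs : ℕ → A → A) (hΦ0 : Φs 0 = Φ)
    (hcont : ∀ r ≤ N, ContinuousOn (Φs r)
      ((fun x : Fin k → ℝ => ∑ j, (x j : ℂ) • e j) '' Ωℝ))
    (hGateaux : ∀ r < N, ∀ ζ ∈ (fun x : Fin k → ℝ => ∑ j, (x j : ℂ) • e j) '' Ωℝ,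
      ∀ h ∈ {h : A | ∃ x : Fin k → ℝ, h = ∑ j, (x j : ℂ) • e j},
        Tendsto (fun ε : ℝ => ((ε : ℂ))⁻¹ • (Φs r (ζ + (ε : ℂ) • h) - Φs r ζ))
          (𝓝[>] (0 : ℝ)) (𝓝 (h * Φs (r + 1) ζ)))
    (hsmooth : ContDiffOn ℝ N (fun x : Fin k → ℝ => Φ (∑ j, (x j : ℂ) • e j)) Ωℝ) :
    (∀ x ∈ Ωℝ, ∀ α ∈ Finset.Nat.antidiagonalTuple k N, ∀ dir : Fin N → Fin k,
      (∀ j : Fin k, (Finset.univ.filter (fun i : Fin N => dir i = j)).card = α j) →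
        iteratedFDerivWithin ℝ N
            (fun x : Fin k → ℝ => Φ (∑ j, (x j : ℂ) • e j)) Ωℝ x
            (fun i : Fin N => Pi.single (dir i) 1) =
          (∏ j : Fin k, e j ^ α j) * Φs N (∑ j, (x j : ℂ) • e j)) ∧
    (∀ C : (Fin k → ℕ) → ℝ,
      (∑ α ∈ Finset.Nat.antidiagonalTuple k N, (C α : ℂ) • ∏ j : Fin k, e j ^ α j)
        = 0 →
      ∀ x ∈ Ωℝ, ∀ dir : (Fin k → ℕ) → Fin N → Fin k,
        (∀ α ∈ Finset.Nat.antidiagonalTuple k N, ∀ j : Fin k,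
          (Finset.univ.filter (fun i : Fin N => dir α i = j)).card = α j) →
        ∑ α ∈ Finset.Nat.antidiagonalTuple k N,
          C α • iteratedFDerivWithin ℝ N
            (fun x : Fin k → ℝ => Φ (∑ j, (x j : ℂ) • e j)) Ωℝ x
            (fun i : Fin N => Pi.single (dir α i) 1) = 0) := by
  have hsmC : ∀ (ε : ℝ) (w : A), ((ε:ℂ))⁻¹ • w = ε⁻¹ • w := fun ε w => by
    rw [← Complex.ofReal_inv, Complex.coe_smul]
  have hstep : ∀ (x : Fin k → ℝ) (ε : ℝ) (j : Fin k),
      (∑ m, (((x + ε • (Pi.single j (1:ℝ) : Fin k → ℝ))) m : ℂ) • e m)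
        = (∑ m, (x m : ℂ) • e m) + (ε:ℂ) • e j := by
    intro x ε j
    simp only [Pi.add_apply, Pi.smul_apply, smul_eq_mul]
    push_cast
    simp only [add_smul, Finset.sum_add_distrib]
    congr 1
    rw [Finset.sum_eq_single j]
    · simp
    · intro m _ hm; simp [Pi.single_apply, hm]
    · simp
  have hej : ∀ j : Fin k, e j ∈ {h : A | ∃ x : Fin k → ℝ, h = ∑ j, (x j : ℂ) • e j} := by
    intro j
    refine ⟨Pi.single j 1, ?_⟩
    rw [Finset.sum_eq_single j]
    · simp
    · intro m _ hm; simp [Pi.single_apply, hm]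
    · simp
  have hUD : UniqueDiffOn ℝ Ωℝ := hΩo.uniqueDiffOn
  have key : ∀ r, r ≤ N → ∀ x ∈ Ωℝ, ∀ dir : Fin r → Fin k,
      iteratedFDerivWithin ℝ r (fun x : Fin k → ℝ => Φ (∑ j, (x j : ℂ) • e j)) Ωℝ x
        (fun i => Pi.single (dir i) 1)
        = (∏ i, e (dir i)) * Φs r (∑ j, (x j : ℂ) • e j) := by
    intro r
    induction r with
    | zero =>
      intro _ x hx dir
      simp [iteratedFDerivWithin_zero_apply, hΦ0]
    | succ r ih =>
      intro hrN x hx dir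
      have hrN' : r < N := lt_of_lt_of_le (Nat.lt_succ_self r) hrN
      set c := ∏ i : Fin r, e (dir i.succ) with hc
      set j := dir 0 with hj
      have hdiffc : DifferentiableWithinAt ℝ
          (iteratedFDerivWithin ℝ r
            (fun x : Fin k → ℝ => Φ (∑ j, (x j : ℂ) • e j)) Ωℝ) Ωℝ x :=
        (hsmooth.differentiableOn_iteratedFDerivWithin (by exact_mod_cast hrN') hUD) x hx
      have hgeq : Set.EqOn
          (fun y => iteratedFDerivWithin ℝ r
            (fun x : Fin k → ℝ => Φ (∑ j, (x j : ℂ) • e j)) Ωℝ y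
            (fun i : Fin r => Pi.single (dir i.succ) 1))
          (fun y => c * Φs r (∑ m, (y m : ℂ) • e m)) Ωℝ :=
        fun y hy => ih (le_of_lt hrN') y hy (fun i => dir i.succ)
      have hg : DifferentiableWithinAt ℝ
          (fun y => iteratedFDerivWithin ℝ r
            (fun x : Fin k → ℝ => Φ (∑ j, (x j : ℂ) • e j)) Ωℝ y
            (fun i : Fin r => Pi.single (dir i.succ) 1)) Ωℝ x :=
        hdiffc.continuousMultilinear_apply_const _
      have hg2 : DifferentiableAt ℝ (fun y => c * Φs r (∑ m, (y m : ℂ) • e m)) x :=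
        ((hg.congr hgeq.symm (hgeq hx).symm).differentiableAt (hΩo.mem_nhds hx))
      have hζ : (∑ m, (x m : ℂ) • e m) ∈
          (fun x : Fin k → ℝ => ∑ j, (x j : ℂ) • e j) '' Ωℝ := ⟨x, hx, rfl⟩
      have hlim0 := hGateaux r hrN' _ hζ (e j) (hej j)
      have hlim : Tendsto (fun ε : ℝ => ε⁻¹ •
          ((fun y => c * Φs r (∑ m, (y m : ℂ) • e m))
              (x + ε • (Pi.single j (1:ℝ) : Fin k → ℝ))
            - (fun y => c * Φs r (∑ m, (y m : ℂ) • e m)) x)) (𝓝[>] 0)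
          (𝓝 (c * (e j * Φs (r+1) (∑ m, (x m : ℂ) • e m)))) := by
        have hmul : Tendsto (fun w : A => c * w)
            (𝓝 (e j * Φs (r+1) (∑ m, (x m : ℂ) • e m)))
            (𝓝 (c * (e j * Φs (r+1) (∑ m, (x m : ℂ) • e m)))) :=
          (continuous_mul_left c).tendsto _
        refine (hmul.comp hlim0).congr fun ε => ?_
        simp only [Function.comp, hstep, hsmC]
        simp [mul_sub, smul_sub, mul_smul_comm]
      have hkey : fderiv ℝ (fun y => c * Φs r (∑ m, (y m : ℂ) • e m)) x
          ((Pi.single j (1:ℝ) : Fin k → ℝ))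
          = c * (e j * Φs (r+1) (∑ m, (x m : ℂ) • e m)) := gateaux_fderiv hg2 hlim
      rw [iteratedFDerivWithin_succ_apply_left]
      have htail : (Fin.tail (fun i : Fin (r+1) =>
          (Pi.single (dir i) 1 : Fin k → ℝ)))
          = fun i : Fin r => (Pi.single (dir i.succ) 1 : Fin k → ℝ) := rfl
      rw [htail,
        ← fderivWithin_continuousMultilinear_apply_const_apply (hUD x hx) hdiffc _ _,
        fderivWithin_congr' hgeq hx, fderivWithin_of_isOpen hΩo hx, hkey,
        Fin.prod_univ_succ]
      ring
  constructor
  · intro x hx α _ dir hdir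
    rw [key N le_rfl x hx dir]
    congr 1
    rw [← Finset.prod_fiberwise_of_maps_to (g := dir)
      (fun i _ => Finset.mem_univ (dir i)) (fun i => e (dir i))]
    refine Finset.prod_congr rfl fun j _ => ?_
    calc ∏ i ∈ Finset.univ.filter (fun i => dir i = j), e (dir i)
        = ∏ _i ∈ Finset.univ.filter (fun i => dir i = j), e j :=
          Finset.prod_congr rfl (fun i hi => by rw [(Finset.mem_filter.mp hi).2])
      _ = e j ^ α j := by rw [Finset.prod_const, hdir j]
  · intro C hchar x hx dir hdir
    have h1 : ∀ α ∈ Finset.Nat.antidiagonalTuple k N,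
        C α • iteratedFDerivWithin ℝ N
          (fun x : Fin k → ℝ => Φ (∑ j, (x j : ℂ) • e j)) Ωℝ x
          (fun i : Fin N => Pi.single (dir α i) 1)
        = ((C α : ℂ) • ∏ j : Fin k, e j ^ α j) * Φs N (∑ j, (x j : ℂ) • e j) := by
      intro α hα
      rw [key N le_rfl x hx (dir α)]
      rw [Complex.coe_smul, smul_mul_assoc]
      congr 2
      rw [← Finset.prod_fiberwise_of_maps_to (g := dir α)
        (fun i _ => Finset.mem_univ (dir α i)) (fun i => e (dir α i))]
      refine Finset.prod_congr rfl fun j _ => ?_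
      calc ∏ i ∈ Finset.univ.filter (fun i => dir α i = j), e (dir α i)
          = ∏ _i ∈ Finset.univ.filter (fun i => dir α i = j), e j :=
            Finset.prod_congr rfl (fun i hi => by rw [(Finset.mem_filter.mp hi).2])
        _ = e j ^ α j := by rw [Finset.prod_const, hdir α hα j]
    rw [Finset.sum_congr rfl h1, ← Finset.sum_mul, hchar, zero_mul]
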